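/- arXiv:1308.5544 — 2 statements merged into one kernel-verified Lean document; each statement's English description precedes it below -/
import Mathlib

section
/- For natural numbers n >= 1 and 0 <= k <= n and every real t, cos(t)^{n-k} * sin(t)^k = (1/2^n) * sum_{p=0}^{n-k} sum_{q=0}^{k} C(n-k,p) * C(k,q) * (-1)^{k-q} * cos((2(p+q) - n) * t - k * pi / 2). -/
open Finset Real

/-- Fourier expansion of `cos^{n-k} t · sin^k t`:
`cos(t)^{n-k} sin(t)^k = 2^{-n} ∑_{p=0}^{n-k} ∑_{q=0}^k C(n-k,p) C(k,q) (-1)^{k-q}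
cos((2(p+q)-n) t - kπ/2)`. -/
theorem cos_pow_mul_sin_pow_fourier (n k : ℕ) (hn : 1 ≤ n) (hk : k ≤ n) (t : ℝ) :
    Real.cos t ^ (n - k) * Real.sin t ^ k =
      (1 / 2 ^ n) * ∑ p ∈ range (n - k + 1), ∑ q ∈ range (k + 1),
        ((n - k).choose p : ℝ) * (k.choose q : ℝ) * (-1 : ℝ) ^ (k - q) *
          Real.cos ((2 * ((p : ℝ) + q) - n) * t - k * π / 2) := by
  obtain ⟨m, rfl⟩ : ∃ m, n = m + k := ⟨n - k, (Nat.sub_add_cancel hk).symm⟩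
  simp only [Nat.add_sub_cancel]
  have hexpI : Complex.exp ((↑(-(π/2)) : ℂ) * Complex.I) = -Complex.I := by
    rw [Complex.exp_mul_I, ← Complex.ofReal_cos, ← Complex.ofReal_sin]; norm_num
  set E := Complex.exp ((t:ℂ) * Complex.I) with hEdef
  set F := Complex.exp (-((t:ℂ) * Complex.I)) with hFdef
  have hcos : Complex.cos (t:ℂ) = (E + F)/2 := by
    rw [hEdef, hFdef, show -((t:ℂ)*Complex.I) = (-(t:ℂ))*Complex.I by ring]; rfl
  have hsin : Complex.sin (t:ℂ) = (F - E) * Complex.I / 2 := by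
    rw [hEdef, hFdef, show -((t:ℂ)*Complex.I) = (-(t:ℂ))*Complex.I by ring]; rfl
  have key : (Complex.cos (t:ℂ))^m * (Complex.sin (t:ℂ))^k
      = (1/2^(m+k) : ℂ) * ∑ p ∈ range (m+1), ∑ q ∈ range (k+1),
          (m.choose p : ℂ) * (k.choose q : ℂ) * (-1:ℂ)^(k-q) *
            Complex.exp ((((2 * ((p:ℝ)+q) - (m+k : ℕ)) * t - k * π / 2 : ℝ) : ℂ) * Complex.I) := by
    rw [hcos, hsin,
      show (E+F)/2 = (E+F) * (1/2 : ℂ) by ring,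
      show (F-E) * Complex.I / 2 = (E + -F) * (-Complex.I * (1/2 : ℂ)) by ring,
      mul_pow, mul_pow, add_pow, add_pow, Finset.sum_mul, Finset.sum_mul]
    simp only [Finset.mul_sum]
    refine Finset.sum_congr rfl fun p hp => ?_
    rw [Finset.sum_mul, Finset.mul_sum]
    refine Finset.sum_congr rfl fun q hq => ?_
    rw [Finset.mem_range, Nat.lt_succ_iff] at hp hq
    have hexps : E^(p+q) * F^(m-p+(k-q)) * (-Complex.I)^k
        = Complex.exp ((((2 * ((p:ℝ)+q) - (m+k : ℕ)) * t - k * π / 2 : ℝ) : ℂ) * Complex.I) := by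
      rw [hEdef, hFdef, show -Complex.I = Complex.exp ((↑(-(π/2)) : ℂ) * Complex.I) from hexpI.symm,
        ← Complex.exp_nat_mul, ← Complex.exp_nat_mul, ← Complex.exp_nat_mul,
        ← Complex.exp_add, ← Complex.exp_add]
      congr 1
      push_cast [Nat.cast_sub hp, Nat.cast_sub hq]
      ring
    rw [neg_pow F, mul_pow (-Complex.I) ((1:ℂ)/2) k]
    calc E ^ p * F ^ (m - p) * ↑(m.choose p) * (1/2:ℂ) ^ m *
          (E ^ q * ((-1:ℂ)^(k-q) * F ^ (k - q)) * ↑(k.choose q) * ((-Complex.I)^k * (1/2:ℂ)^k))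
        = (↑(m.choose p) * ↑(k.choose q) * (-1:ℂ)^(k-q)) * ((1/2:ℂ)^(m+k)) *
            (E^(p+q) * F^(m-p+(k-q)) * (-Complex.I)^k) := by ring
      _ = _ := by rw [hexps]; ring_nf; rw [one_div]; ring
  calc Real.cos t ^ m * Real.sin t ^ k
      = ((Complex.cos (t:ℂ))^m * (Complex.sin (t:ℂ))^k).re := by
        rw [← Complex.ofReal_cos, ← Complex.ofReal_sin, ← Complex.ofReal_pow,
          ← Complex.ofReal_pow, ← Complex.ofReal_mul, Complex.ofReal_re]
    _ = ((1/2^(m+k) : ℂ) * ∑ p ∈ range (m+1), ∑ q ∈ range (k+1),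
          (m.choose p : ℂ) * (k.choose q : ℂ) * (-1:ℂ)^(k-q) *
            Complex.exp ((((2 * ((p:ℝ)+q) - (m+k : ℕ)) * t - k * π / 2 : ℝ) : ℂ) * Complex.I)).re := by
        rw [key]
    _ = (1 / 2 ^ (m+k)) * ∑ p ∈ range (m + 1), ∑ q ∈ range (k + 1),
          (m.choose p : ℝ) * (k.choose q : ℝ) * (-1 : ℝ) ^ (k - q) *
            Real.cos ((2 * ((p : ℝ) + q) - (m+k : ℕ)) * t - k * π / 2) := by
        rw [show (1/2^(m+k) : ℂ) = ((1/2^(m+k) : ℝ) : ℂ) by push_cast; ring,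
          Complex.re_ofReal_mul, Complex.re_sum]
        refine congrArg _ (Finset.sum_congr rfl fun p _ => ?_)
        rw [Complex.re_sum]
        refine Finset.sum_congr rfl fun q _ => ?_
        rw [show ((m.choose p : ℂ) * (k.choose q : ℂ) * (-1:ℂ)^(k-q))
              = (((m.choose p : ℝ) * (k.choose q : ℝ) * (-1:ℝ)^(k-q) : ℝ) : ℂ) by push_cast; ring,
          Complex.re_ofReal_mul, Complex.exp_ofReal_mul_I_re]
end

section
/- Let n >= 2 be even, let a_0, ..., a_n be nonnegative reals with a_n = omega > 0, let V_0 >= 0, and suppose that for all t >= 0 one has (P(t)/omega)^{n+1} >= ((n+1) Q(t) / omega)^n, where P(t) = sum_{k=0}^n a_k t^k and Q(t) = V_0 + sum_{k=0}^n a_k t^{k+1}/(k+1). Then a_{n-1}^2 >= omega * a_{n-2}. -/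
open Finset Filter Topology

lemma onePow (M : ℕ) (x : ℝ) :
    (1 + x) ^ (M + 2) =
      1 + ((M:ℝ)+2) * x + ∑ k ∈ range (M+1), ((M+2).choose (k+2) : ℝ) * x ^ (k+2) := by
  rw [add_comm 1 x, add_pow, Finset.sum_range_succ', Finset.sum_range_succ']
  have hsum : ∀ (c : ℕ → ℝ), ∑ i ∈ range (M+1), x^(i+1+1) * (1:ℝ)^(M+2-(i+1+1)) * c i
      = ∑ i ∈ range (M+1), c i * x^(i+2) := fun c => Finset.sum_congr rfl fun i _ => by
    rw [one_pow]; ring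
  rw [hsum]
  simp only [show (0:ℕ)+1 = 1 from rfl, pow_zero, pow_one, one_pow, mul_one, one_mul,
    Nat.choose_zero_right, Nat.choose_one_right, Nat.cast_one]
  push_cast
  ring

lemma onePow3 (M : ℕ) (x : ℝ) :
    (1 + x) ^ (M + 3) =
      1 + ((M:ℝ)+3) * x + ∑ k ∈ range (M+2), ((M+3).choose (k+2) : ℝ) * x ^ (k+2) := by
  have h := onePow (M+1) x
  rw [show M+1+2 = M+3 from rfl, show M+1+1 = M+2 from rfl] at h
  rw [h]; push_cast; ring

lemma expandAux (M : ℕ) (x y t : ℝ) :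
    t^2 * ((1+x)^(M+3) - (1+y)^(M+2)) =
      t^2 * (((M:ℝ)+3)*x - ((M:ℝ)+2)*y)
        + t^2 * ∑ k ∈ range (M+2), ((M+3).choose (k+2) : ℝ) * x^(k+2)
        - t^2 * ∑ k ∈ range (M+1), ((M+2).choose (k+2) : ℝ) * y^(k+2) := by
  rw [onePow3 M x, onePow M y]; ring

lemma limAux {i j : ℕ} (c : ℝ) (h : i ≤ j ∨ c = 0) :
    Tendsto (fun t : ℝ => c * (t ^ i / t ^ j)) atTop (𝓝 (if i = j then c else 0)) := by
  rcases h with h | h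
  · rcases eq_or_lt_of_le h with rfl | hlt
    · simp only [if_pos rfl]
      have he : (fun t : ℝ => c * (t ^ i / t ^ i)) =ᶠ[atTop] fun _ => c := by
        filter_upwards [eventually_ge_atTop (1:ℝ)] with t ht
        have : (0:ℝ) < t := lt_of_lt_of_le one_pos ht
        rw [div_self (by positivity), mul_one]
      exact Tendsto.congr' he.symm tendsto_const_nhds
    · rw [if_neg hlt.ne]
      simpa using (tendsto_pow_div_pow_atTop_zero (𝕜 := ℝ) hlt).const_mul c
  · have h0 : (fun t : ℝ => c * (t ^ i / t ^ j)) = fun _ => (0:ℝ) := by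
      funext t; simp [h]
    rw [h0]
    rcases eq_or_ne i j with rfl | hij
    · simp only [if_pos rfl, h]; exact tendsto_const_nhds
    · simp only [if_neg hij]; exact tendsto_const_nhds

lemma algAux (m : ℕ) (A B : ℝ) :
    (((m:ℝ)+3)*A*(1 - ((m:ℝ)+2)/((m:ℝ)+1))
        + ((m+3).choose 2 : ℝ) * B^2
        - ((m+2).choose 2 : ℝ) * (((m:ℝ)+3)*B/(((m+1:ℕ):ℝ)+1))^2)
      = ((m:ℝ)+3)/(2*((m:ℝ)+1)*((m:ℝ)+2))
          * (((m:ℝ)+1)*B^2 - 2*((m:ℝ)+2)*A) := by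
  have hm1 : ((m:ℝ)+1) ≠ 0 := by positivity
  have hm2 : ((m:ℝ)+2) ≠ 0 := by positivity
  rw [Nat.cast_choose_two, Nat.cast_choose_two]
  push_cast
  field_simp [hm1, hm2]
  ring

lemma facAux (f E : ℝ) (hf : 0 < f) (h : 0 ≤ f * E) : 0 ≤ E := by
  nlinarith [h, hf]

lemma keyAux (M A B : ℝ) (hM : 0 ≤ M) (hA : 0 ≤ A) (h : 2*(M+2)*A ≤ (M+1)*B^2) :
    A ≤ B^2 := by
  nlinarith [sq_nonneg B, mul_nonneg hM (sq_nonneg B), mul_nonneg hM hA]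

lemma finAux (ω A B : ℝ) (hω : 0 < ω) (h : A/ω ≤ (B/ω)^2) : ω * A ≤ B^2 := by
  have h2 := mul_le_mul_of_nonneg_left h (sq_nonneg ω)
  have e : ω^2*(A/ω) = ω*A := by field_simp [hω.ne']
  have e2 : ω^2*((B/ω)^2) = B^2 := by field_simp [hω.ne']
  rw [e, e2] at h2
  exact h2

/-- Abstract form of the Euclidean isoperimetric inequality applied to parallel
hypersurfaces, even-dimensional case: comparing the next coefficients yields
the Alexandrov-Fenchel inequality `a_{n-1}² ≥ ω a_{n-2}`. -/
theorem next_coefficients_even (n : ℕ) (hn : 2 ≤ n) (hneven : Even n) (a : ℕ → ℝ)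
    (ha : ∀ k ≤ n, 0 ≤ a k) (ω : ℝ) (hω : 0 < ω) (han : a n = ω)
    (V₀ : ℝ) (hV₀ : 0 ≤ V₀)
    (hiso : ∀ t : ℝ, 0 ≤ t →
      (((n : ℝ) + 1) * (V₀ + ∑ k ∈ range (n + 1), a k * t ^ (k + 1) / (k + 1)) / ω) ^ n ≤
        ((∑ k ∈ range (n + 1), a k * t ^ k) / ω) ^ (n + 1)) :
    ω * a (n - 2) ≤ a (n - 1) ^ 2 := by
  obtain ⟨m, rfl⟩ : ∃ m, n = m + 2 := ⟨n - 2, by omega⟩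
  have hω' : ω ≠ 0 := hω.ne'
  have hm1 : (0:ℝ) < (m:ℝ)+1 := by positivity
  have hm2 : (0:ℝ) < (m:ℝ)+2 := by positivity
  have hm3 : (0:ℝ) < (m:ℝ)+3 := by positivity
  set X : ℝ → ℝ := fun t => (∑ k ∈ range (m+2+1), a k * t ^ k) / (ω * t^(m+2)) - 1 with hXdef
  set Y : ℝ → ℝ := fun t =>
      (((m+2:ℕ):ℝ) + 1) * (V₀ + ∑ k ∈ range (m+2+1), a k * t^(k+1)/((k:ℝ)+1)) / (ω * t^(m+3)) - 1
    with hYdef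
  -- nonnegativity of the scaled difference
  have hE0 : ∀ᶠ t : ℝ in atTop, 0 ≤ t^2 * ((1 + X t)^(m+3) - (1 + Y t)^(m+2)) := by
    filter_upwards [eventually_ge_atTop (1:ℝ)] with t ht
    have ht0 : (0:ℝ) < t := lt_of_lt_of_le one_pos ht
    have h := hiso t ht0.le
    have e1 : (∑ k ∈ range (m+2+1), a k * t ^ k) / ω = (1 + X t) * t^(m+2) := by
      rw [hXdef]; field_simp; ring
    have e2 : (((m+2:ℕ):ℝ) + 1) * (V₀ + ∑ k ∈ range (m+2+1), a k * t^(k+1)/((k:ℝ)+1)) / ω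
        = (1 + Y t) * t^(m+3) := by
      rw [hYdef]; field_simp; ring
    rw [e1, e2, mul_pow, mul_pow, ← pow_mul, ← pow_mul, Nat.mul_comm (m+3) (m+2)] at h
    have h' : (1 + Y t)^(m+2) ≤ (1 + X t)^(m+2+1) :=
      le_of_mul_le_mul_right h (pow_pos ht0 _)
    have : (0:ℝ) ≤ (1 + X t)^(m+3) - (1 + Y t)^(m+2) := sub_nonneg.mpr h'
    positivity
  -- t * X t
  have hXev : (fun t:ℝ => t * X t)
      =ᶠ[atTop] fun t => ∑ k ∈ range (m+2), (a k/ω) * (t^(k+1)/t^(m+2)) := by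
    filter_upwards [eventually_ge_atTop (1:ℝ)] with t ht
    have ht0 : (0:ℝ) < t := lt_of_lt_of_le one_pos ht
    rw [hXdef]
    simp only
    rw [Finset.sum_range_succ, han]
    rw [Finset.sum_congr rfl (fun k (_ : k ∈ range (m+2)) => by field_simp; ring :
      ∀ k ∈ range (m+2), (a k/ω) * (t^(k+1)/t^(m+2)) = (a k * t^k) * (t/(ω*t^(m+2))))]
    rw [← Finset.sum_mul]
    field_simp
    ring
  have hL1 : Tendsto (fun t:ℝ => t * X t) atTop (𝓝 (a (m+1)/ω)) := by
    have h := tendsto_finset_sum (range (m+2))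
      (fun k (hk : k ∈ range (m+2)) => limAux (i := k+1) (j := m+2) (a k/ω)
        (Or.inl (by have := Finset.mem_range.mp hk; omega)))
    have hval : ∑ k ∈ range (m+2), (if k+1 = m+2 then a k/ω else 0) = a (m+1)/ω := by
      have hcong : ∀ k ∈ range (m+2),
          (if k+1 = m+2 then a k/ω else 0) = (if k = m+1 then a k/ω else 0) := by
        intro k _
        by_cases hk : k = m+1
        · subst hk; rw [if_pos rfl, if_pos rfl]
        · rw [if_neg (by omega), if_neg hk]
      rw [Finset.sum_congr rfl hcong,
        Finset.sum_ite_eq' (range (m+2)) (m+1) (fun k => a k/ω), if_pos (by simp)]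
    rw [hval] at h
    exact Tendsto.congr' hXev.symm h
  -- t * Y t
  have hYev : (fun t:ℝ => t * Y t)
      =ᶠ[atTop] fun t => (((m:ℝ)+3)*V₀/ω) * (t^1/t^(m+3))
        + ∑ k ∈ range (m+2), (((m:ℝ)+3)*(a k/ω)/((k:ℝ)+1)) * (t^(k+2)/t^(m+3)) := by
    filter_upwards [eventually_ge_atTop (1:ℝ)] with t ht
    have ht0 : (0:ℝ) < t := lt_of_lt_of_le one_pos ht
    rw [hYdef]
    simp only
    rw [Finset.sum_range_succ, han]
    have hcong : ∀ k ∈ range (m+2),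
        (((m:ℝ)+3)*(a k/ω)/((k:ℝ)+1)) * (t^(k+2)/t^(m+3))
          = (a k * t^(k+1)/((k:ℝ)+1)) * (((m:ℝ)+3)*t/(ω*t^(m+3))) := by
      intro k _
      have hk : ((k:ℝ)+1) ≠ 0 := by positivity
      field_simp
      ring
    rw [Finset.sum_congr rfl hcong, ← Finset.sum_mul]
    push_cast
    field_simp
    ring
  have hL2 : Tendsto (fun t:ℝ => t * Y t) atTop
      (𝓝 (((m:ℝ)+3)*(a (m+1)/ω)/(((m+1:ℕ):ℝ)+1))) := by
    have hV : Tendsto (fun t:ℝ => (((m:ℝ)+3)*V₀/ω) * (t^1/t^(m+3))) atTop (𝓝 0) := by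
      have := limAux (i := 1) (j := m+3) (((m:ℝ)+3)*V₀/ω) (Or.inl (by omega))
      rwa [if_neg (by omega)] at this
    have h := tendsto_finset_sum (range (m+2))
      (fun k (hk : k ∈ range (m+2)) =>
        limAux (i := k+2) (j := m+3) (((m:ℝ)+3)*(a k/ω)/((k:ℝ)+1))
          (Or.inl (by have := Finset.mem_range.mp hk; omega)))
    have hval : ∑ k ∈ range (m+2),
        (if k+2 = m+3 then ((m:ℝ)+3)*(a k/ω)/((k:ℝ)+1) else 0)
          = ((m:ℝ)+3)*(a (m+1)/ω)/(((m+1:ℕ):ℝ)+1) := by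
      have hcong : ∀ k ∈ range (m+2),
          (if k+2 = m+3 then ((m:ℝ)+3)*(a k/ω)/((k:ℝ)+1) else 0)
            = (if k = m+1 then ((m:ℝ)+3)*(a k/ω)/((k:ℝ)+1) else 0) := by
        intro k _
        by_cases hk : k = m+1
        · subst hk; rw [if_pos rfl, if_pos rfl]
        · rw [if_neg (by omega), if_neg hk]
      rw [Finset.sum_congr rfl hcong,
        Finset.sum_ite_eq' (range (m+2)) (m+1) (fun k => ((m:ℝ)+3)*(a k/ω)/((k:ℝ)+1)),
        if_pos (by simp)]
    rw [hval] at h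
    have htot := hV.add h
    rw [zero_add] at htot
    exact Tendsto.congr' hYev.symm htot
  -- t^2 * ((m+3) X - (m+2) Y)
  have hZev : (fun t:ℝ => t^2 * (((m:ℝ)+3) * X t - ((m:ℝ)+2) * Y t))
      =ᶠ[atTop] fun t =>
        (∑ k ∈ range (m+2), (((m:ℝ)+3)*(a k/ω)*(1 - ((m:ℝ)+2)/((k:ℝ)+1))) * (t^(k+2)/t^(m+2)))
          - (((m:ℝ)+2)*((m:ℝ)+3)*V₀/ω) * (t^2/t^(m+3)) := by
    filter_upwards [eventually_ge_atTop (1:ℝ)] with t ht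
    have ht0 : (0:ℝ) < t := lt_of_lt_of_le one_pos ht
    rw [hXdef, hYdef]
    simp only
    rw [show (∑ k ∈ range (m+2+1), a k * t ^ k)
        = (∑ k ∈ range (m+2), a k * t ^ k) + ω * t^(m+2) from by
      rw [Finset.sum_range_succ, han]]
    rw [show (∑ k ∈ range (m+2+1), a k * t^(k+1)/((k:ℝ)+1))
        = (∑ k ∈ range (m+2), a k * t^(k+1)/((k:ℝ)+1)) + ω * t^(m+2+1)/(((m+2:ℕ):ℝ)+1) from by
      rw [Finset.sum_range_succ, han]]
    have hcong : ∀ k ∈ range (m+2),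
        (((m:ℝ)+3)*(a k/ω)*(1 - ((m:ℝ)+2)/((k:ℝ)+1))) * (t^(k+2)/t^(m+2))
          = (a k * t^k) * (((m:ℝ)+3)*t^2/(ω*t^(m+2)))
            - (a k * t^(k+1)/((k:ℝ)+1)) * (((m:ℝ)+2)*((m:ℝ)+3)*t^2/(ω*t^(m+3))) := by
      intro k _
      have hk : ((k:ℝ)+1) ≠ 0 := by positivity
      field_simp
      ring
    rw [Finset.sum_congr rfl hcong, Finset.sum_sub_distrib, ← Finset.sum_mul, ← Finset.sum_mul]
    push_cast
    field_simp
    ring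
  have hL3 : Tendsto (fun t:ℝ => t^2 * (((m:ℝ)+3) * X t - ((m:ℝ)+2) * Y t)) atTop
      (𝓝 (((m:ℝ)+3)*(a m/ω)*(1 - ((m:ℝ)+2)/((m:ℝ)+1)))) := by
    have hV : Tendsto (fun t:ℝ => (((m:ℝ)+2)*((m:ℝ)+3)*V₀/ω) * (t^2/t^(m+3))) atTop (𝓝 0) := by
      have := limAux (i := 2) (j := m+3) (((m:ℝ)+2)*((m:ℝ)+3)*V₀/ω) (Or.inl (by omega))
      rwa [if_neg (by omega)] at this
    have h := tendsto_finset_sum (range (m+2))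
      (fun k (hk : k ∈ range (m+2)) =>
        limAux (i := k+2) (j := m+2) (((m:ℝ)+3)*(a k/ω)*(1 - ((m:ℝ)+2)/((k:ℝ)+1)))
          (by
            rcases Nat.lt_or_ge k (m+1) with hlt | hge
            · exact Or.inl (by omega)
            · have hk2 : k = m+1 := by have := Finset.mem_range.mp hk; omega
              subst hk2
              refine Or.inr ?_
              have : (((m+1:ℕ):ℝ)+1) = (m:ℝ)+2 := by push_cast; ring
              rw [this, div_self hm2.ne']
              ring))
    have hval : ∑ k ∈ range (m+2),
        (if k+2 = m+2 then ((m:ℝ)+3)*(a k/ω)*(1 - ((m:ℝ)+2)/((k:ℝ)+1)) else 0)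
          = ((m:ℝ)+3)*(a m/ω)*(1 - ((m:ℝ)+2)/((m:ℝ)+1)) := by
      have hcong : ∀ k ∈ range (m+2),
          (if k+2 = m+2 then ((m:ℝ)+3)*(a k/ω)*(1 - ((m:ℝ)+2)/((k:ℝ)+1)) else 0)
            = (if k = m then ((m:ℝ)+3)*(a k/ω)*(1 - ((m:ℝ)+2)/((k:ℝ)+1)) else 0) := by
        intro k _
        by_cases hk : k = m
        · subst hk; rw [if_pos rfl, if_pos rfl]
        · rw [if_neg (by omega), if_neg hk]
      rw [Finset.sum_congr rfl hcong,
        Finset.sum_ite_eq' (range (m+2)) m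
          (fun k => ((m:ℝ)+3)*(a k/ω)*(1 - ((m:ℝ)+2)/((k:ℝ)+1))),
        if_pos (by simp)]
    rw [hval] at h
    have htot := h.sub hV
    rw [sub_zero] at htot
    exact Tendsto.congr' hZev.symm htot
  -- higher order terms in X
  have hT2ev : (fun t:ℝ => t^2 * ∑ k ∈ range (m+2), ((m+3).choose (k+2) : ℝ) * X t^(k+2))
      =ᶠ[atTop] fun t =>
        ∑ k ∈ range (m+2), (((m+3).choose (k+2):ℝ) * (t^0/t^k)) * (t * X t)^(k+2) := by
    filter_upwards [eventually_ge_atTop (1:ℝ)] with t ht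
    have ht0 : (0:ℝ) < t := lt_of_lt_of_le one_pos ht
    rw [Finset.mul_sum]
    refine Finset.sum_congr rfl fun k _ => ?_
    have htk : t^(k+2) = t^k * t^2 := by ring
    rw [pow_zero, mul_pow, htk]
    have h : t^k ≠ 0 := by positivity
    field_simp
  have hT2 : Tendsto (fun t:ℝ => t^2 * ∑ k ∈ range (m+2), ((m+3).choose (k+2) : ℝ) * X t^(k+2))
      atTop (𝓝 (((m+3).choose 2 : ℝ) * (a (m+1)/ω)^2)) := by
    have h := tendsto_finset_sum (range (m+2))
      (fun k (_ : k ∈ range (m+2)) =>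
        (limAux (i := 0) (j := k) (((m+3).choose (k+2):ℝ)) (Or.inl (Nat.zero_le k))).mul
          (hL1.pow (k+2)))
    have hval : ∑ k ∈ range (m+2),
        (if 0 = k then ((m+3).choose (k+2):ℝ) else 0) * (a (m+1)/ω)^(k+2)
          = ((m+3).choose 2 : ℝ) * (a (m+1)/ω)^2 := by
      have hcong : ∀ k ∈ range (m+2),
          (if 0 = k then ((m+3).choose (k+2):ℝ) else 0) * (a (m+1)/ω)^(k+2)
            = (if k = 0 then ((m+3).choose 2 : ℝ) * (a (m+1)/ω)^2 else 0) := by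
        intro k _
        by_cases hk : k = 0
        · subst hk; rw [if_pos rfl, if_pos rfl]
        · rw [if_neg (fun hh => hk hh.symm), if_neg hk, zero_mul]
      rw [Finset.sum_congr rfl hcong,
        Finset.sum_ite_eq' (range (m+2)) 0 (fun _ => ((m+3).choose 2 : ℝ) * (a (m+1)/ω)^2),
        if_pos (by simp)]
    rw [hval] at h
    exact Tendsto.congr' hT2ev.symm h
  -- higher order terms in Y
  have hT3ev : (fun t:ℝ => t^2 * ∑ k ∈ range (m+1), ((m+2).choose (k+2) : ℝ) * Y t^(k+2))
      =ᶠ[atTop] fun t =>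
        ∑ k ∈ range (m+1), (((m+2).choose (k+2):ℝ) * (t^0/t^k)) * (t * Y t)^(k+2) := by
    filter_upwards [eventually_ge_atTop (1:ℝ)] with t ht
    have ht0 : (0:ℝ) < t := lt_of_lt_of_le one_pos ht
    rw [Finset.mul_sum]
    refine Finset.sum_congr rfl fun k _ => ?_
    have htk : t^(k+2) = t^k * t^2 := by ring
    rw [pow_zero, mul_pow, htk]
    have h : t^k ≠ 0 := by positivity
    field_simp
  have hT3 : Tendsto (fun t:ℝ => t^2 * ∑ k ∈ range (m+1), ((m+2).choose (k+2) : ℝ) * Y t^(k+2))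
      atTop (𝓝 (((m+2).choose 2 : ℝ) * (((m:ℝ)+3)*(a (m+1)/ω)/(((m+1:ℕ):ℝ)+1))^2)) := by
    have h := tendsto_finset_sum (range (m+1))
      (fun k (_ : k ∈ range (m+1)) =>
        (limAux (i := 0) (j := k) (((m+2).choose (k+2):ℝ)) (Or.inl (Nat.zero_le k))).mul
          (hL2.pow (k+2)))
    have hval : ∑ k ∈ range (m+1),
        (if 0 = k then ((m+2).choose (k+2):ℝ) else 0)
            * (((m:ℝ)+3)*(a (m+1)/ω)/(((m+1:ℕ):ℝ)+1))^(k+2)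
          = ((m+2).choose 2 : ℝ) * (((m:ℝ)+3)*(a (m+1)/ω)/(((m+1:ℕ):ℝ)+1))^2 := by
      have hcong : ∀ k ∈ range (m+1),
          (if 0 = k then ((m+2).choose (k+2):ℝ) else 0)
              * (((m:ℝ)+3)*(a (m+1)/ω)/(((m+1:ℕ):ℝ)+1))^(k+2)
            = (if k = 0 then
                ((m+2).choose 2 : ℝ) * (((m:ℝ)+3)*(a (m+1)/ω)/(((m+1:ℕ):ℝ)+1))^2 else 0) := by
        intro k _
        by_cases hk : k = 0
        · subst hk; rw [if_pos rfl, if_pos rfl]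
        · rw [if_neg (fun hh => hk hh.symm), if_neg hk, zero_mul]
      rw [Finset.sum_congr rfl hcong,
        Finset.sum_ite_eq' (range (m+1)) 0
          (fun _ => ((m+2).choose 2 : ℝ) * (((m:ℝ)+3)*(a (m+1)/ω)/(((m+1:ℕ):ℝ)+1))^2),
        if_pos (by simp)]
    rw [hval] at h
    exact Tendsto.congr' hT3ev.symm h
  -- assemble
  have hGlim : Tendsto (fun t:ℝ => t^2 * ((1 + X t)^(m+3) - (1 + Y t)^(m+2))) atTop
      (𝓝 (((m:ℝ)+3)*(a m/ω)*(1 - ((m:ℝ)+2)/((m:ℝ)+1))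
        + ((m+3).choose 2 : ℝ) * (a (m+1)/ω)^2
        - ((m+2).choose 2 : ℝ) * (((m:ℝ)+3)*(a (m+1)/ω)/(((m+1:ℕ):ℝ)+1))^2)) :=
    ((hL3.add hT2).sub hT3).congr (fun t => (expandAux m (X t) (Y t) t).symm)
  have hc : (0:ℝ) ≤ ((m:ℝ)+3)*(a m/ω)*(1 - ((m:ℝ)+2)/((m:ℝ)+1))
        + ((m+3).choose 2 : ℝ) * (a (m+1)/ω)^2
        - ((m+2).choose 2 : ℝ) * (((m:ℝ)+3)*(a (m+1)/ω)/(((m+1:ℕ):ℝ)+1))^2 :=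
    ge_of_tendsto hGlim hE0
  -- final algebra
  rw [algAux m (a m/ω) (a (m+1)/ω)] at hc
  have hE := facAux _ _ (div_pos hm3 (mul_pos (mul_pos two_pos hm1) hm2)) hc
  have hkey : 2*((m:ℝ)+2)*(a m/ω) ≤ ((m:ℝ)+1)*(a (m+1)/ω)^2 := by linarith
  have ham : 0 ≤ a m := ha m (by omega)
  have hAB : a m / ω ≤ (a (m+1) / ω)^2 :=
    keyAux (m:ℝ) _ _ (Nat.cast_nonneg m) (div_nonneg ham hω.le) hkey
  rw [show m+2-2 = m from rfl, show m+2-1 = m+1 from rfl]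
  exact finAux ω (a m) (a (m+1)) hω hAB
end
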